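/- arXiv:2407.18816 — 3 statements merged into one kernel-verified Lean document; each statement's English description precedes it below -/
import Mathlib

section
/- Let S = conv(v₀, …, v_d) ⊂ ℝ^d be a d-simplex spanned by affinely independent points, let F : S → S be continuous, and for i = 0, …, d define C_i := {x ∈ S : λ_i(F(x)) ≤ λ_i(x)}, where λ_i denotes the i-th barycentric coordinate with respect to v₀, …, v_d. Then each C_i is a closed subset of S, and for every nonempty subset {i₁, …, iₙ} ⊆ {0, …, d} one has conv(v_{i₁}, …, v_{iₙ}) ⊆ C_{i₁} ∪ ⋯ ∪ C_{iₙ}. -/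
lemma coord_mem_hull {d : ℕ} (b : AffineBasis (Fin (d + 1)) ℝ (EuclideanSpace ℝ (Fin d)))
    (i : Fin (d + 1)) {s : Set (EuclideanSpace ℝ (Fin d))}
    {x : EuclideanSpace ℝ (Fin d)} (hx : x ∈ convexHull ℝ s) :
    b.coord i x ∈ convexHull ℝ (b.coord i '' s) := by
  rw [← AffineMap.image_convexHull]
  exact Set.mem_image_of_mem _ hx

/-- **The sets `C_i` are closed and satisfy the KKM covering condition.**
Let `S = conv(v₀, …, v_d) ⊂ ℝ^d` be a `d`-simplex spanned by affinely independent
points (equivalently, the vertices `b i` of an affine basis `b` of `ℝ^d`, whose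
barycentric coordinates are `λ_i = b.coord i`), let `F : S → S` be continuous and
set `C_i := {x ∈ S : λ_i (F x) ≤ λ_i x}`.  Then each `C_i` is a closed subset of
`S`, and for every nonempty index set `I = {i₁, …, iₙ} ⊆ {0, …, d}` one has
`conv(v_{i₁}, …, v_{iₙ}) ⊆ C_{i₁} ∪ ⋯ ∪ C_{iₙ}`. -/
theorem Ci_closed_and_cover (d : ℕ)
    (b : AffineBasis (Fin (d + 1)) ℝ (EuclideanSpace ℝ (Fin d)))
    (S : Set (EuclideanSpace ℝ (Fin d)))
    (hS : S = convexHull ℝ (Set.range ⇑b))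
    (F : EuclideanSpace ℝ (Fin d) → EuclideanSpace ℝ (Fin d))
    (hF : Set.MapsTo F S S) (hFc : ContinuousOn F S)
    (C : Fin (d + 1) → Set (EuclideanSpace ℝ (Fin d)))
    (hC : ∀ i, C i = {x | x ∈ S ∧ b.coord i (F x) ≤ b.coord i x}) :
    (∀ i, IsClosed (C i) ∧ C i ⊆ S) ∧
    (∀ I : Finset (Fin (d + 1)), I.Nonempty →
      convexHull ℝ (⇑b '' (I : Set (Fin (d + 1)))) ⊆ ⋃ i ∈ I, C i) := by
  -- coords nonneg on S
  have coord_nonneg : ∀ i, ∀ y ∈ S, 0 ≤ b.coord i y := by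
    intro i y hy
    rw [hS] at hy
    have h := coord_mem_hull b i hy
    have hsub : b.coord i '' Set.range ⇑b ⊆ Set.Ici (0 : ℝ) := by
      rintro _ ⟨_, ⟨j, rfl⟩, rfl⟩
      simp only [AffineBasis.coord_apply, Set.mem_Ici]
      split <;> norm_num
    have := convexHull_min hsub (convex_Ici 0) h
    exact this
  have hScl : IsClosed S := by
    rw [hS]
    exact ((Set.finite_range ⇑b).isCompact_convexHull (𝕜 := ℝ)).isClosed
  constructor
  · intro i
    have hcont : ContinuousOn (fun x => b.coord i x - b.coord i (F x)) S :=
      ((b.coord i).continuous_of_finiteDimensional.continuousOn).sub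
        ((b.coord i).continuous_of_finiteDimensional.comp_continuousOn hFc)
    have : C i = S ∩ (fun x => b.coord i x - b.coord i (F x)) ⁻¹' Set.Ici 0 := by
      rw [hC]; ext x
      simp only [Set.mem_setOf_eq, Set.mem_inter_iff, Set.mem_preimage, Set.mem_Ici,
        sub_nonneg]
    constructor
    · rw [this]
      exact hcont.preimage_isClosed_of_isClosed hScl isClosed_Ici
    · rw [hC]; exact fun x hx => hx.1
  · intro I hI x hx
    have hxS : x ∈ S := by
      rw [hS]
      exact convexHull_mono (Set.image_subset_range _ _) hx
    by_contra hxC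
    simp only [Set.mem_iUnion, not_exists] at hxC
    have hlt : ∀ i ∈ I, b.coord i x < b.coord i (F x) := by
      intro i hi
      by_contra hle
      exact hxC i hi ((hC i) ▸ ⟨hxS, not_lt.1 hle⟩)
    -- coords outside I vanish
    have hzero : ∀ i ∉ I, b.coord i x = 0 := by
      intro i hi
      have h := coord_mem_hull b i hx
      have hsub : b.coord i '' (⇑b '' (I : Set (Fin (d + 1)))) ⊆ ({0} : Set ℝ) := by
        rintro _ ⟨_, ⟨j, hj, rfl⟩, rfl⟩
        simp only [AffineBasis.coord_apply, Set.mem_singleton_iff]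
        rw [if_neg]
        rintro rfl; exact hi hj
      have := convexHull_min hsub (convex_singleton 0) h
      simpa using this
    have hsum1 : ∑ i, b.coord i x = 1 := b.sum_coord_apply_eq_one x
    have hsum2 : ∑ i, b.coord i (F x) = 1 := b.sum_coord_apply_eq_one (F x)
    have hxsum : ∑ i ∈ I, b.coord i x = 1 := by
      rw [← hsum1]
      exact Finset.sum_subset (Finset.subset_univ I)
        (fun i _ hi => hzero i hi)
    have hFx : F x ∈ S := hF hxS
    have h1 : (1 : ℝ) < ∑ i ∈ I, b.coord i (F x) := by
      rw [← hxsum]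
      exact Finset.sum_lt_sum_of_nonempty hI hlt
    have h2 : ∑ i ∈ I, b.coord i (F x) ≤ 1 := by
      rw [← hsum2]
      exact Finset.sum_le_sum_of_subset_of_nonneg (Finset.subset_univ I)
        (fun i _ _ => coord_nonneg i (F x) hFx)
    linarith
end

section
/- Let S = conv(v₀, …, v_d) ⊂ ℝ^d be a d-simplex spanned by affinely independent points, let F : S → S be a mapping, and let λ_i denote the i-th barycentric coordinate with respect to v₀, …, v_d. For every nonempty subset {i₁, …, iₙ} ⊆ {0, …, d} and every x ∈ conv(v_{i₁}, …, v_{iₙ}), there exists k ∈ {i₁, …, iₙ} such that λ_k(x) − λ_k(F(x)) = max_{j = 0, …, d} (λ_j(x) − λ_j(F(x))); that is, the maximum of the barycentric-coordinate decrease is attained at an index belonging to the face containing x. Moreover, if x is a fixed point of F, then every index j ∈ {0, …, d} attains this maximum (which equals 0). -/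
/-- **The argmax-based labeling satisfies the face condition.**
Let `S = conv(v₀, …, v_d) ⊂ ℝ^d` be a `d`-simplex spanned by affinely independent
points (the vertices `b i` of an affine basis `b` of `ℝ^d`, with barycentric
coordinates `λ_i = b.coord i`), and `F : S → S` a mapping.  For every nonempty
index set `I = {i₁, …, iₙ}` and every `x ∈ conv(v_{i₁}, …, v_{iₙ})` there is a
`k ∈ I` at which `max_j (λ_j x − λ_j (F x))` is attained.  Moreover if `x ∈ S` is a
fixed point of `F`, then every index `j` attains this maximum, which equals `0`. -/
theorem argmax_on_face (d : ℕ)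
    (b : AffineBasis (Fin (d + 1)) ℝ (EuclideanSpace ℝ (Fin d)))
    (F : EuclideanSpace ℝ (Fin d) → EuclideanSpace ℝ (Fin d))
    (hF : Set.MapsTo F (convexHull ℝ (Set.range ⇑b)) (convexHull ℝ (Set.range ⇑b))) :
    (∀ I : Finset (Fin (d + 1)), I.Nonempty →
      ∀ x ∈ convexHull ℝ (⇑b '' (I : Set (Fin (d + 1)))),
        ∃ k ∈ I, ∀ j, b.coord j x - b.coord j (F x) ≤ b.coord k x - b.coord k (F x)) ∧
    (∀ x ∈ convexHull ℝ (Set.range ⇑b), F x = x →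
      ∀ j, b.coord j x - b.coord j (F x) = 0 ∧
        ∀ j', b.coord j' x - b.coord j' (F x) ≤ b.coord j x - b.coord j (F x)) := by
  have hnn : ∀ y ∈ convexHull ℝ (Set.range ⇑b), ∀ j, 0 ≤ b.coord j y := by
    intro y hy j
    rw [b.convexHull_eq_nonneg_coord] at hy
    exact hy j
  constructor
  · intro I hI x hx
    have hxS : x ∈ convexHull ℝ (Set.range ⇑b) :=
      convexHull_mono (Set.image_subset_range _ _) hx
    have hFx := hF hxS
    have hzero : ∀ j ∉ I, b.coord j x = 0 := by
      intro j hj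
      have hconv : Convex ℝ ((b.coord j) ⁻¹' {(0:ℝ)}) :=
        (convex_singleton 0).affine_preimage _
      have : x ∈ (b.coord j) ⁻¹' {(0:ℝ)} := by
        refine convexHull_min ?_ hconv hx
        rintro _ ⟨i, hi, rfl⟩
        have : j ≠ i := fun h => hj (h ▸ hi)
        simp [b.coord_apply, this]
      simpa using this
    set g : Fin (d+1) → ℝ := fun j => b.coord j x - b.coord j (F x) with hg
    have hsum : ∑ j, g j = 0 := by
      simp [hg, Finset.sum_sub_distrib, b.sum_coord_apply_eq_one]
    have houtside : ∀ j ∉ I, g j ≤ 0 := by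
      intro j hj
      have := hnn _ hFx j
      simp [hg, hzero j hj]
      linarith
    have hIsum : 0 ≤ ∑ j ∈ I, g j := by
      have h1 : ∑ j ∈ Iᶜ, g j ≤ 0 := by
        apply Finset.sum_nonpos
        intro j hj
        exact houtside j (by simpa using hj)
      have h2 : ∑ j ∈ I, g j + ∑ j ∈ Iᶜ, g j = 0 := by
        rw [Finset.sum_add_sum_compl]; exact hsum
      linarith
    obtain ⟨k, hkI, hk⟩ := I.exists_max_image g hI
    have hk0 : 0 ≤ g k := by
      obtain ⟨i, hiI, hi⟩ := Finset.exists_le_of_sum_le hI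
        (by simpa using hIsum : ∑ _j ∈ I, (0:ℝ) ≤ ∑ j ∈ I, g j)
      exact le_trans hi (hk i hiI)
    refine ⟨k, hkI, fun j => ?_⟩
    by_cases hj : j ∈ I
    · exact hk j hj
    · exact le_trans (houtside j hj) hk0
  · intro x _ hfix j
    constructor
    · rw [hfix]; ring
    · intro j'; rw [hfix]; simp
end

section
/- Let d = 2 and let S = conv(0, e₁, e₂) ⊂ ℝ² be the unit 2-simplex. After bisecting S at the midpoint of its unique longest edge {e₁, e₂} (yielding the two halves conv(0, e₁, m) and conv(0, e₂, m) with m = (e₁+e₂)/2), and then bisecting either half along one of its longest edges, every 2-simplex produced that contains the vertex e₁ (respectively e₂, respectively 0) is congruent to the original simplex S scaled by 1/2; in particular, the subsimplex of the twice-refined triangulation containing e₁ has one edge lying on the line through 0 and e₁ and one edge lying on the line through e₁ and e₂, each of half the original length, so it is the image of S under the homothety with center e₁ and ratio 1/2. -/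
/-- Longest-edge bisection of a `d`-simplex given by its vertices `a 0, …, a d`:
choose an edge `{a i, a j}` of maximal length among all edges and replace one of
its two endpoints by the midpoint `(a i + a j) / 2`, obtaining (the vertex tuple
of) one of the two halves of the simplex. -/
def LongestEdgeBisect {d : ℕ} (a c : Fin (d + 1) → EuclideanSpace ℝ (Fin d)) : Prop :=
  ∃ i j : Fin (d + 1), i ≠ j ∧
    (∀ k l : Fin (d + 1), dist (a k) (a l) ≤ dist (a i) (a j)) ∧
    (c = Function.update a i (midpoint ℝ (a i) (a j)) ∨
     c = Function.update a j (midpoint ℝ (a i) (a j)))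

section Aux

lemma dist2 (x y : EuclideanSpace ℝ (Fin 2)) :
    dist x y = Real.sqrt ((x 0 - y 0)^2 + (x 1 - y 1)^2) := by
  rw [EuclideanSpace.dist_eq]
  simp [Fin.sum_univ_two, Real.dist_eq, sq_abs]

lemma esp_ext {x y : EuclideanSpace ℝ (Fin 2)} (h0 : x 0 = y 0) (h1 : x 1 = y 1) : x = y := by
  ext i
  fin_cases i <;> assumption

lemma range_fin3 {α : Type*} (f : Fin 3 → α) : Set.range f = {f 0, f 1, f 2} := by
  ext x
  constructor
  · rintro ⟨k, rfl⟩; fin_cases k <;> simp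
  · rintro (rfl | rfl | rfl) <;> exact ⟨_, rfl⟩

lemma mid_apply (x y : EuclideanSpace ℝ (Fin 2)) (i : Fin 2) :
    midpoint ℝ x y i = (x i + y i) / 2 := by
  rw [midpoint_eq_smul_add, invOf_eq_inv]
  simp only [PiLp.smul_apply, PiLp.add_apply, smul_eq_mul]
  ring

lemma dist_mid (a x y : EuclideanSpace ℝ (Fin 2)) :
    dist (midpoint ℝ a x) (midpoint ℝ a y) = dist x y / 2 := by
  simp only [dist_eq_norm]
  have h : midpoint ℝ a x - midpoint ℝ a y = (2⁻¹:ℝ) • (x - y) := by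
    rw [midpoint_eq_smul_add, midpoint_eq_smul_add, invOf_eq_inv, ← smul_sub,
      add_sub_add_left_eq_sub]
  rw [h, norm_smul]
  simp
  ring

lemma sqrt_quarter (s : ℝ) (hs : 0 ≤ s) : Real.sqrt (s / 4) = Real.sqrt s / 2 := by
  rw [Real.sqrt_div hs, show Real.sqrt 4 = 2 by
    rw [show (4:ℝ) = 2^2 by norm_num, Real.sqrt_sq]; norm_num]

lemma homothety_half (c x : EuclideanSpace ℝ (Fin 2)) :
    AffineMap.homothety c (1/2 : ℝ) x = midpoint ℝ c x := by
  rw [AffineMap.homothety_apply, midpoint_eq_smul_add, invOf_eq_inv]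
  simp only [vsub_eq_sub, vadd_eq_add]
  module

lemma bisect_cases {a c : Fin 3 → EuclideanSpace ℝ (Fin 2)} {p q : Fin 3}
    (h : LongestEdgeBisect a c)
    (hmax : ∀ k l : Fin 3, dist (a k) (a l) < dist (a p) (a q) ∨
      (k = p ∧ l = q) ∨ (k = q ∧ l = p)) :
    c = Function.update a p (midpoint ℝ (a p) (a q)) ∨
    c = Function.update a q (midpoint ℝ (a p) (a q)) := by
  obtain ⟨i, j, hij, hm, hc⟩ := h
  have hle := hm p q
  rcases hmax i j with hlt | ⟨rfl, rfl⟩ | ⟨rfl, rfl⟩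
  · linarith
  · exact hc
  · rw [midpoint_comm] at hc
    exact hc.symm

/-- The triple of congruence statements, given one global congruence. -/
lemma triple_of_congr {u t : Fin 3 → EuclideanSpace ℝ (Fin 2)}
    (T : EuclideanSpace ℝ (Fin 2) → EuclideanSpace ℝ (Fin 2))
    (hT : ∀ x y, dist (T x) (T y) = dist x y / 2)
    (hr : Set.range t = T '' Set.range u)
    (P Q R : Prop) :
    ((P → ∃ T : EuclideanSpace ℝ (Fin 2) → EuclideanSpace ℝ (Fin 2),
          (∀ x y, dist (T x) (T y) = dist x y / 2) ∧
          Set.range t = T '' Set.range u) ∧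
     (Q → ∃ T : EuclideanSpace ℝ (Fin 2) → EuclideanSpace ℝ (Fin 2),
          (∀ x y, dist (T x) (T y) = dist x y / 2) ∧
          Set.range t = T '' Set.range u) ∧
     (R → ∃ T : EuclideanSpace ℝ (Fin 2) → EuclideanSpace ℝ (Fin 2),
          (∀ x y, dist (T x) (T y) = dist x y / 2) ∧
          Set.range t = T '' Set.range u)) :=
  ⟨fun _ => ⟨T, hT, hr⟩, fun _ => ⟨T, hT, hr⟩, fun _ => ⟨T, hT, hr⟩⟩

end Aux

/-- **Two-dimensional base case of Theorem 1 of the paper.**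
Let `S = conv(0, e₁, e₂) ⊂ ℝ²` be the unit 2-simplex.  After bisecting `S` along
its unique longest edge `{e₁, e₂}` and then bisecting either half along one of its
longest edges, every 2-simplex `t` produced that contains `e₁` (respectively `e₂`,
respectively `0`) as a vertex is congruent to `S` scaled by `1/2` (i.e. is the
image of `S` under a map multiplying all distances by `1/2`); moreover the
produced subsimplex containing `e₁` is the image of `S` under the homothety with
center `e₁` and ratio `1/2`. -/
theorem unit_triangle_bisection_base_case
    (e1 e2 : EuclideanSpace ℝ (Fin 2))
    (he1 : e1 = EuclideanSpace.single 0 1)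
    (he2 : e2 = EuclideanSpace.single 1 1)
    (u : Fin 3 → EuclideanSpace ℝ (Fin 2))
    (hu : u = ![0, e1, e2])
    (w t : Fin 3 → EuclideanSpace ℝ (Fin 2))
    (hw : LongestEdgeBisect u w) (ht : LongestEdgeBisect w t) :
    ((e1 ∈ Set.range t →
        ∃ T : EuclideanSpace ℝ (Fin 2) → EuclideanSpace ℝ (Fin 2),
          (∀ x y, dist (T x) (T y) = dist x y / 2) ∧
          Set.range t = T '' Set.range u) ∧
     (e2 ∈ Set.range t →
        ∃ T : EuclideanSpace ℝ (Fin 2) → EuclideanSpace ℝ (Fin 2),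
          (∀ x y, dist (T x) (T y) = dist x y / 2) ∧
          Set.range t = T '' Set.range u) ∧
     ((0 : EuclideanSpace ℝ (Fin 2)) ∈ Set.range t →
        ∃ T : EuclideanSpace ℝ (Fin 2) → EuclideanSpace ℝ (Fin 2),
          (∀ x y, dist (T x) (T y) = dist x y / 2) ∧
          Set.range t = T '' Set.range u)) ∧
    (e1 ∈ Set.range t →
      convexHull ℝ (Set.range t) =
        AffineMap.homothety e1 (1 / 2 : ℝ) '' convexHull ℝ (Set.range u)) := by
  -- coordinates
  have e10 : e1 0 = 1 := by simp [he1, EuclideanSpace.single_apply]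
  have e11 : e1 1 = 0 := by simp [he1, EuclideanSpace.single_apply]
  have e20 : e2 0 = 0 := by simp [he2, EuclideanSpace.single_apply]
  have e21 : e2 1 = 1 := by simp [he2, EuclideanSpace.single_apply]
  have z0 : (0 : EuclideanSpace ℝ (Fin 2)) 0 = 0 := rfl
  have z1 : (0 : EuclideanSpace ℝ (Fin 2)) 1 = 0 := rfl
  have u0 : u 0 = 0 := by rw [hu]; rfl
  have u1 : u 1 = e1 := by rw [hu]; rfl
  have u2 : u 2 = e2 := by rw [hu]; rfl
  set m := midpoint ℝ e1 e2 with hmdef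
  have m0 : m 0 = 1/2 := by rw [hmdef, mid_apply, e10, e20]; norm_num
  have m1 : m 1 = 1/2 := by rw [hmdef, mid_apply, e11, e21]; norm_num
  -- basic numbers
  have hs2 : (1:ℝ) < Real.sqrt 2 := by
    rw [show (1:ℝ) = Real.sqrt 1 by simp]
    exact Real.sqrt_lt_sqrt (by norm_num) (by norm_num)
  have hs12 : Real.sqrt (1/2) < 1 := by
    rw [show (1:ℝ) = Real.sqrt 1 by simp]
    exact Real.sqrt_lt_sqrt (by norm_num) (by norm_num)
  -- distance facts
  have d01 : dist (0 : EuclideanSpace ℝ (Fin 2)) e1 = 1 := by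
    rw [dist2, z0, z1, e10, e11]; norm_num
  have d02 : dist (0 : EuclideanSpace ℝ (Fin 2)) e2 = 1 := by
    rw [dist2, z0, z1, e20, e21]; norm_num
  have d12 : dist e1 e2 = Real.sqrt 2 := by
    rw [dist2, e10, e11, e20, e21]; norm_num
  have d0m : dist (0 : EuclideanSpace ℝ (Fin 2)) m = Real.sqrt (1/2) := by
    rw [dist2, z0, z1, m0, m1]; norm_num
  have d1m : dist e1 m = Real.sqrt (1/2) := by
    rw [dist2, e10, e11, m0, m1]; norm_num
  have d2m : dist e2 m = Real.sqrt (1/2) := by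
    rw [dist2, e20, e21, m0, m1]; norm_num
  have hrangeu : Set.range u = {0, e1, e2} := by
    rw [range_fin3, u0, u1, u2]
  -- first bisection: longest edge is {u 1, u 2}
  have hwc := bisect_cases (p := 1) (q := 2) hw ?hmaxu
  case hmaxu =>
    intro k l
    fin_cases k <;> fin_cases l <;>
      simp only [Fin.zero_eta, Fin.mk_one, Fin.reduceFinMk] <;>
      [skip; skip; skip; skip; skip; (right; left; constructor <;> trivial); skip;
        (right; right; constructor <;> trivial); skip] <;>
      (left;
        simp only [u0, u1, u2, dist_self, dist_comm e1 0, dist_comm e2 0, dist_comm e2 e1,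
          d01, d02, d12] <;> linarith)
  rw [u1, u2, ← hmdef] at hwc
  rcases hwc with hw' | hw'
  case inl =>
    -- w = (0, m, e2); longest edge of w is {w 0, w 2} = {0, e2}
    have w0 : w 0 = 0 := by rw [hw', Function.update_of_ne (by decide), u0]
    have w1 : w 1 = m := by rw [hw', Function.update_self]
    have w2 : w 2 = e2 := by rw [hw', Function.update_of_ne (by decide), u2]
    have htc := bisect_cases (p := 0) (q := 2) ht ?hmaxw1
    case hmaxw1 =>
      intro k l
      fin_cases k <;> fin_cases l <;>
        simp only [Fin.zero_eta, Fin.mk_one, Fin.reduceFinMk] <;>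
        [skip; skip; (right; left; constructor <;> trivial); skip; skip; skip;
          (right; right; constructor <;> trivial); skip; skip] <;>
        (left;
          simp only [w0, w1, w2, dist_self, dist_comm m 0, dist_comm e2 0, dist_comm m e2, d02, d0m, d2m] <;> linarith)
    rw [w0, w2] at htc
    set n := midpoint ℝ (0 : EuclideanSpace ℝ (Fin 2)) e2 with hndef
    have n0 : n 0 = 0 := by rw [hndef, mid_apply, z0, e20]; norm_num
    have n1 : n 1 = 1/2 := by rw [hndef, mid_apply, z1, e21]; norm_num
    rcases htc with ht' | ht'
    case inl =>
      -- t = (n, m, e2): contains e2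
      have t0 : t 0 = n := by rw [ht', Function.update_self]
      have t1 : t 1 = m := by rw [ht', Function.update_of_ne (by decide), w1]
      have t2 : t 2 = e2 := by rw [ht', Function.update_of_ne (by decide), w2]
      have hranget : Set.range t = {n, m, e2} := by rw [range_fin3, t0, t1, t2]
      have he1not : e1 ∉ Set.range t := by
        rw [hranget]
        rintro (h | h | h) <;> rw [h] at e10
        · rw [n0] at e10; norm_num at e10
        · rw [m0] at e10; norm_num at e10
        · rw [e20] at e10; norm_num at e10
      have hr : Set.range t = (fun x => midpoint ℝ e2 x) '' Set.range u := by
        rw [hranget, hrangeu]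
        simp only [Set.image_insert_eq, Set.image_singleton]
        rw [midpoint_comm e2 (0 : EuclideanSpace ℝ (Fin 2)), ← hndef,
          midpoint_comm e2 e1, ← hmdef, midpoint_self]
      exact ⟨triple_of_congr _ (fun x y => dist_mid e2 x y) hr _ _ _,
        fun h => absurd h he1not⟩
    case inr =>
      -- t = (0, m, n): contains 0
      have t0 : t 0 = 0 := by rw [ht', Function.update_of_ne (by decide), w0]
      have t1 : t 1 = m := by rw [ht', Function.update_of_ne (by decide), w1]
      have t2 : t 2 = n := by rw [ht', Function.update_self]
      have hranget : Set.range t = {(0 : EuclideanSpace ℝ (Fin 2)), m, n} := by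
        rw [range_fin3, t0, t1, t2]
      have he1not : e1 ∉ Set.range t := by
        rw [hranget]
        rintro (h | h | h) <;> rw [h] at e10
        · rw [z0] at e10; norm_num at e10
        · rw [m0] at e10; norm_num at e10
        · rw [n0] at e10; norm_num at e10
      -- reflected similarity: T x = (x₀/2, 1/2 - x₁/2)
      set T : EuclideanSpace ℝ (Fin 2) → EuclideanSpace ℝ (Fin 2) :=
        fun x => WithLp.toLp 2 (![x 0 / 2, 1/2 - x 1 / 2] : Fin 2 → ℝ) with hTdef
      have hTap : ∀ (x : EuclideanSpace ℝ (Fin 2)), T x 0 = x 0 / 2 ∧ T x 1 = 1/2 - x 1 / 2 :=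
        fun x => ⟨rfl, rfl⟩
      have hT : ∀ x y, dist (T x) (T y) = dist x y / 2 := by
        intro x y
        rw [dist2, dist2, (hTap x).1, (hTap x).2, (hTap y).1, (hTap y).2]
        rw [show (x 0 / 2 - y 0 / 2)^2 + ((1/2 - x 1 / 2) - (1/2 - y 1 / 2))^2
            = ((x 0 - y 0)^2 + (x 1 - y 1)^2) / 4 by ring]
        exact sqrt_quarter _ (by positivity)
      have hr : Set.range t = T '' Set.range u := by
        rw [hranget, hrangeu]
        simp only [Set.image_insert_eq, Set.image_singleton]
        have i1 : T 0 = n := esp_ext (by rw [(hTap 0).1, z0, n0] <;> norm_num)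
          (by rw [(hTap 0).2, z1, n1] <;> norm_num)
        have i2 : T e1 = m := esp_ext (by rw [(hTap e1).1, e10, m0])
          (by rw [(hTap e1).2, e11, m1] <;> norm_num)
        have i3 : T e2 = 0 := esp_ext (by rw [(hTap e2).1, e20, z0] <;> norm_num)
          (by rw [(hTap e2).2, e21, z1] <;> norm_num)
        rw [i1, i2, i3]
        ext x
        simp only [Set.mem_insert_iff, Set.mem_singleton_iff]
        tauto
      exact ⟨triple_of_congr T hT hr _ _ _, fun h => absurd h he1not⟩
  case inr =>
    -- w = (0, e1, m); longest edge of w is {w 0, w 1} = {0, e1}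
    have w0 : w 0 = 0 := by rw [hw', Function.update_of_ne (by decide), u0]
    have w1 : w 1 = e1 := by rw [hw', Function.update_of_ne (by decide), u1]
    have w2 : w 2 = m := by rw [hw', Function.update_self]
    have htc := bisect_cases (p := 0) (q := 1) ht ?hmaxw2
    case hmaxw2 =>
      intro k l
      fin_cases k <;> fin_cases l <;>
        simp only [Fin.zero_eta, Fin.mk_one, Fin.reduceFinMk] <;>
        [skip; (right; left; constructor <;> trivial); skip;
          (right; right; constructor <;> trivial); skip; skip; skip; skip; skip] <;>
        (left;
          simp only [w0, w1, w2, dist_self, dist_comm e1 0, dist_comm m 0, dist_comm m e1, d01, d0m, d1m] <;> linarith)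
    rw [w0, w1] at htc
    set n := midpoint ℝ (0 : EuclideanSpace ℝ (Fin 2)) e1 with hndef
    have n0 : n 0 = 1/2 := by rw [hndef, mid_apply, z0, e10]; norm_num
    have n1 : n 1 = 0 := by rw [hndef, mid_apply, z1, e11]; norm_num
    rcases htc with ht' | ht'
    case inl =>
      -- t = (n, e1, m): contains e1, the homothety case
      have t0 : t 0 = n := by rw [ht', Function.update_self]
      have t1 : t 1 = e1 := by rw [ht', Function.update_of_ne (by decide), w1]
      have t2 : t 2 = m := by rw [ht', Function.update_of_ne (by decide), w2]
      have hranget : Set.range t = {n, e1, m} := by rw [range_fin3, t0, t1, t2]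
      have hr : Set.range t = (fun x => midpoint ℝ e1 x) '' Set.range u := by
        rw [hranget, hrangeu]
        simp only [Set.image_insert_eq, Set.image_singleton]
        rw [midpoint_comm e1 (0 : EuclideanSpace ℝ (Fin 2)), ← hndef, ← hmdef, midpoint_self]
      refine ⟨triple_of_congr _ (fun x y => dist_mid e1 x y) hr _ _ _, fun _ => ?_⟩
      have himg : ⇑(AffineMap.homothety e1 (1/2:ℝ)) '' Set.range u
          = (fun x => midpoint ℝ e1 x) '' Set.range u :=
        Set.image_congr fun x _ => homothety_half e1 x
      rw [AffineMap.image_convexHull, himg, ← hr]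
    case inr =>
      -- t = (0, n, m): contains 0
      have t0 : t 0 = 0 := by rw [ht', Function.update_of_ne (by decide), w0]
      have t1 : t 1 = n := by rw [ht', Function.update_self]
      have t2 : t 2 = m := by rw [ht', Function.update_of_ne (by decide), w2]
      have hranget : Set.range t = {(0 : EuclideanSpace ℝ (Fin 2)), n, m} := by
        rw [range_fin3, t0, t1, t2]
      have he1not : e1 ∉ Set.range t := by
        rw [hranget]
        rintro (h | h | h) <;> rw [h] at e10
        · rw [z0] at e10; norm_num at e10
        · rw [n0] at e10; norm_num at e10
        · rw [m0] at e10; norm_num at e10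
      -- reflected similarity: T x = (1/2 - x₀/2, x₁/2)
      set T : EuclideanSpace ℝ (Fin 2) → EuclideanSpace ℝ (Fin 2) :=
        fun x => WithLp.toLp 2 (![1/2 - x 0 / 2, x 1 / 2] : Fin 2 → ℝ) with hTdef
      have hTap : ∀ (x : EuclideanSpace ℝ (Fin 2)), T x 0 = 1/2 - x 0 / 2 ∧ T x 1 = x 1 / 2 :=
        fun x => ⟨rfl, rfl⟩
      have hT : ∀ x y, dist (T x) (T y) = dist x y / 2 := by
        intro x y
        rw [dist2, dist2, (hTap x).1, (hTap x).2, (hTap y).1, (hTap y).2]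
        rw [show ((1/2 - x 0 / 2) - (1/2 - y 0 / 2))^2 + (x 1 / 2 - y 1 / 2)^2
            = ((x 0 - y 0)^2 + (x 1 - y 1)^2) / 4 by ring]
        exact sqrt_quarter _ (by positivity)
      have hr : Set.range t = T '' Set.range u := by
        rw [hranget, hrangeu]
        simp only [Set.image_insert_eq, Set.image_singleton]
        have i1 : T 0 = n := esp_ext (by rw [(hTap 0).1, z0, n0] <;> norm_num)
          (by rw [(hTap 0).2, z1, n1] <;> norm_num)
        have i2 : T e1 = 0 := esp_ext (by rw [(hTap e1).1, e10, z0] <;> norm_num)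
          (by rw [(hTap e1).2, e11, z1] <;> norm_num)
        have i3 : T e2 = m := esp_ext (by rw [(hTap e2).1, e20, m0] <;> norm_num)
          (by rw [(hTap e2).2, e21, m1] <;> norm_num)
        rw [i1, i2, i3]
        ext x
        simp only [Set.mem_insert_iff, Set.mem_singleton_iff]
        tauto
      exact ⟨triple_of_congr T hT hr _ _ _, fun h => absurd h he1not⟩
end
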